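/- The optimal discriminator for the GAN loss: for fixed densities p (generated) and q (real) with respect to a common measure, the function d maximizing E_{z∼p}[log(1 − d(z))] + E_{z∼q}[log d(z)] over measurable d : Z → (0,1) is d*(z) = q(z)/(p(z) + q(z)) (almost everywhere where p+q > 0). -/

import Mathlib

open MeasureTheory

lemma gan_pointwise (a b t : ℝ) (ha : 0 < a) (hb : 0 < b)
    (ht : t ∈ Set.Ioo (0 : ℝ) 1) :
    a * Real.log (1 - t) + b * Real.log t
      ≤ a * Real.log (1 - b / (a + b)) + b * Real.log (b / (a + b)) := by
  obtain ⟨ht0, ht1⟩ := ht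
  have hab : 0 < a + b := by linarith
  have h1 : 1 - b / (a + b) = a / (a + b) := by field_simp; ring
  rw [h1]
  have h1t : 0 < 1 - t := by linarith
  have hA : Real.log (1 - t) - Real.log (a / (a + b))
      = Real.log ((1 - t) * (a + b) / a) := by
    rw [Real.log_div (by positivity) (by positivity),
      Real.log_div (by positivity) (by positivity),
      Real.log_mul (by positivity) (by positivity)]
    ring
  have hB : Real.log t - Real.log (b / (a + b))
      = Real.log (t * (a + b) / b) := by
    rw [Real.log_div (by positivity) (by positivity),
      Real.log_div (by positivity) (by positivity),
      Real.log_mul (by positivity) (by positivity)]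
    ring
  have hA' : Real.log ((1 - t) * (a + b) / a) ≤ (1 - t) * (a + b) / a - 1 :=
    Real.log_le_sub_one_of_pos (by positivity)
  have hB' : Real.log (t * (a + b) / b) ≤ t * (a + b) / b - 1 :=
    Real.log_le_sub_one_of_pos (by positivity)
  have key : a * (Real.log (1 - t) - Real.log (a / (a + b)))
      + b * (Real.log t - Real.log (b / (a + b))) ≤ 0 := by
    rw [hA, hB]
    have e1 : a * ((1 - t) * (a + b) / a - 1) = (1 - t) * (a + b) - a := by
      field_simp
    have e2 : b * (t * (a + b) / b - 1) = t * (a + b) - b := by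
      field_simp
    nlinarith [mul_le_mul_of_nonneg_left hA' ha.le,
      mul_le_mul_of_nonneg_left hB' hb.le]
  linarith

/-- the optimal GAN discriminator.  With generated density `p`
and real density `q` (positive, integrating to 1) over a reference measure
`μ`, the discriminator `d*(z) = q(z)/(p(z)+q(z))` maximizes
`V(d) = ∫ p(z)·log(1−d(z)) + q(z)·log d(z) dμ` over measurable
`d : Z → (0,1)`. -/
theorem optimal_discriminator {Z : Type*} [MeasurableSpace Z]
    (μ : Measure Z) (p q : Z → ℝ)
    (hp : Measurable p) (hq : Measurable q)
    (hppos : ∀ z, 0 < p z) (hqpos : ∀ z, 0 < q z)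
    (hpint : ∫ z, p z ∂μ = 1) (hqint : ∫ z, q z ∂μ = 1)
    (d : Z → ℝ) (hd : Measurable d) (hd01 : ∀ z, d z ∈ Set.Ioo (0 : ℝ) 1)
    (hintd : Integrable
      (fun z => p z * Real.log (1 - d z) + q z * Real.log (d z)) μ)
    (hintstar : Integrable
      (fun z => p z * Real.log (1 - q z / (p z + q z))
        + q z * Real.log (q z / (p z + q z))) μ) :
    ∫ z, (p z * Real.log (1 - d z) + q z * Real.log (d z)) ∂μ
      ≤ ∫ z, (p z * Real.log (1 - q z / (p z + q z))
          + q z * Real.log (q z / (p z + q z))) ∂μ := by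
  exact integral_mono hintd hintstar fun z =>
    gan_pointwise (p z) (q z) (d z) (hppos z) (hqpos z) (hd01 z)
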